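/- Let 0 < δ < π/2. Then the function V^δ is twice continuously differentiable on ℝ, satisfies (V^δ)″(x) ≥ cos δ for all x ∈ ℝ with inf_{x∈ℝ}(V^δ)″(x) = cos δ, and satisfies V^δ(x) ≥ −cos x for all x ∈ ℝ. -/

import Mathlib

open MeasureTheory Real Filter Topology

namespace XYPaper

noncomputable section

/-! ### Lattice geometry -/

/-- The real point of `ℝ^d` corresponding to the lattice point `z ∈ ℤ^d`, scaled by `ε`. -/
def toPt (d : ℕ) (ε : ℝ) (z : Fin d → ℤ) : Fin d → ℝ := fun i => ε * (z i : ℝ)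

/-- `z` is a site of `D^ε = D ∩ εℤ^d` (in lattice coordinates). -/
def IsSite (d : ℕ) (D : Set (Fin d → ℝ)) (ε : ℝ) (z : Fin d → ℤ) : Prop := toPt d ε z ∈ D

/-- Nearest-neighbour adjacency in `ℤ^d`. -/
def Adj (d : ℕ) (z w : Fin d → ℤ) : Prop := (∑ i, |z i - w i|) = 1

/-- Directed nearest-neighbour edge of `D^ε`: both endpoints are sites of `D^ε`. -/
def IsEdge (d : ℕ) (D : Set (Fin d → ℝ)) (ε : ℝ) (p : (Fin d → ℤ) × (Fin d → ℤ)) : Prop :=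
  IsSite d D ε p.1 ∧ IsSite d D ε p.2 ∧ Adj d p.1 p.2

/-- Boundary site of `D^ε`: a site adjacent in `εℤ^d` to a vertex outside `D^ε`. -/
def IsBdry (d : ℕ) (D : Set (Fin d → ℝ)) (ε : ℝ) (z : Fin d → ℤ) : Prop :=
  IsSite d D ε z ∧ ∃ w, Adj d z w ∧ ¬ IsSite d D ε w

/-- Interior (non-boundary) site of `D^ε`. -/
def IsInterior (d : ℕ) (D : Set (Fin d → ℝ)) (ε : ℝ) (z : Fin d → ℤ) : Prop :=
  IsSite d D ε z ∧ ¬ IsBdry d D ε z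

/-- The set of all sites of `D^ε`. -/
def siteSet (d : ℕ) (D : Set (Fin d → ℝ)) (ε : ℝ) : Set (Fin d → ℤ) := {z | IsSite d D ε z}

/-! ### Configurations and Gibbs measures -/

/-- Extend a configuration defined on the (interior) sites `I` by zero. -/
def extendZero {V : Type*} [DecidableEq V] (I : Finset V) (θ : ↥I → ℝ) : V → ℝ :=
  fun z => if h : z ∈ I then θ ⟨z, h⟩ else 0

/-- Extend a configuration defined on the (interior) sites `I` by the boundary datum `f`. -/
def extendBy {V : Type*} [DecidableEq V] (I : Finset V) (f : V → ℝ) (θ : ↥I → ℝ) : V → ℝ :=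
  fun z => if h : z ∈ I then θ ⟨z, h⟩ else f z

/-- The normalized (probability, when the normalization is finite and nonzero) measure on
`ℝ^ι` with the given density with respect to Lebesgue measure. -/
def normGibbs {ι : Type*} [Fintype ι] (f : (ι → ℝ) → ENNReal) : Measure (ι → ℝ) :=
  ((volume.withDensity f) Set.univ)⁻¹ • volume.withDensity f

/-- The Gibbs measure with edge potentials `W e`, zero boundary conditions outside the
interior vertex set `I`, and Hamiltonian `∑_{e ∈ E} W e (θ(e₁) - θ(e₂))`. -/
def gibbsMeasure {V : Type*} [DecidableEq V] (I : Finset V) (E : Finset (V × V))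
    (W : V × V → ℝ → ℝ) : Measure (↥I → ℝ) :=
  normGibbs fun θ =>
    ENNReal.ofReal (Real.exp (-∑ e ∈ E, W e (extendZero I θ e.1 - extendZero I θ e.2)))

/-- The gradient Gibbs measure with potential `V`, inverse temperature `β`, zero boundary
conditions. -/
def gradGibbs {Vtx : Type*} [DecidableEq Vtx] (I : Finset Vtx) (E : Finset (Vtx × Vtx))
    (β : ℝ) (V : ℝ → ℝ) : Measure (↥I → ℝ) :=
  gibbsMeasure I E (fun _ x => β * V x)

/-- The Ginzburg–Landau measure with potential `U` and boundary condition `f`. -/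
def glGibbs {Vtx : Type*} [DecidableEq Vtx] (I : Finset Vtx) (E : Finset (Vtx × Vtx))
    (U : ℝ → ℝ) (f : Vtx → ℝ) : Measure (↥I → ℝ) :=
  normGibbs fun θ =>
    ENNReal.ofReal (Real.exp (-∑ e ∈ E, U (extendBy I f θ e.2 - extendBy I f θ e.1)))

/-- The XY Gibbs measure with Dirichlet (zero) boundary conditions: the angular variables
take values in `[-π, π)` and the density is `exp(β ∑_{(i,j)} cos(θ i - θ j))`. -/
def xyGibbs {Vtx : Type*} [DecidableEq Vtx] (I : Finset Vtx) (E : Finset (Vtx × Vtx))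
    (β : ℝ) : Measure (↥I → ℝ) :=
  normGibbs fun θ =>
    Set.indicator {θ' : ↥I → ℝ | ∀ z, θ' z ∈ Set.Ico (-π) π}
      (fun θ' => ENNReal.ofReal
        (Real.exp (β * ∑ e ∈ E, Real.cos (extendZero I θ' e.1 - extendZero I θ' e.2)))) θ

/-- The representative of `x` modulo `2π` lying in `[-π, π)`. -/
def angleRep (x : ℝ) : ℝ := x - 2 * π * (⌊(x + π) / (2 * π)⌋ : ℤ)

/-- The gradient variable of the XY model on the directed edge `p = (i,j)`:
the representative of `θ(j) - θ(i)` modulo `2π` lying in `[-π,π)`. -/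
def etaXY {V : Type*} [DecidableEq V] (I : Finset V) (θ : ↥I → ℝ) (p : V × V) : ℝ :=
  angleRep (extendZero I θ p.2 - extendZero I θ p.1)

/-- The gradient variable of a gradient field on the directed edge `p = (i,j)`:
`η(p) = θ(j) - θ(i)`. -/
def etaGrad {V : Type*} [DecidableEq V] (I : Finset V) (θ : ↥I → ℝ) (p : V × V) : ℝ :=
  extendZero I θ p.2 - extendZero I θ p.1

/-- The fluctuation-field pairing `⟨η̃, φ⟩ = ε^{d/2-1} ∑_b ∇φ(b) √β η(b)`. -/
def pairing {d : ℕ} (ε β : ℝ) (E : Finset ((Fin d → ℤ) × (Fin d → ℤ)))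
    (φ : (Fin d → ℝ) → ℝ) (ηf : (Fin d → ℤ) × (Fin d → ℤ) → ℝ) : ℝ :=
  ε ^ ((d : ℝ) / 2 - 1) *
    ∑ b ∈ E, (φ (toPt d ε b.2) - φ (toPt d ε b.1)) * (Real.sqrt β * ηf b)

/-- `⟨∂φ, ∂φ⟩ = ∫_D ∑_α (∂φ/∂x_α)² dx`. -/
def dirichletEnergy {d : ℕ} (D : Set (Fin d → ℝ)) (φ : (Fin d → ℝ) → ℝ) : ℝ :=
  ∫ x in D, ∑ α : Fin d, (fderiv ℝ φ x (Pi.single α 1)) ^ 2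

/-- `φ ∈ C₀^∞(D)`. -/
def IsTestFun {d : ℕ} (D : Set (Fin d → ℝ)) (φ : (Fin d → ℝ) → ℝ) : Prop :=
  ContDiff ℝ (⊤ : ℕ∞) φ ∧ HasCompactSupport φ ∧ tsupport φ ⊆ D

/-- `D` is a bounded domain (open, bounded and connected) with smooth boundary: it is a
regular sublevel set of a smooth function. -/
def SmoothBoundedDomain {d : ℕ} (D : Set (Fin d → ℝ)) : Prop :=
  IsOpen D ∧ Bornology.IsBounded D ∧ IsConnected D ∧
    ∃ F : (Fin d → ℝ) → ℝ, ContDiff ℝ (⊤ : ℕ∞) F ∧ D = F ⁻¹' Set.Iio 0 ∧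
      ∀ x ∈ frontier D, fderiv ℝ F x ≠ 0

/-! ### Loops, plaquettes, discrete simple connectivity -/

/-- A loop in the vertex set `S`: a nonempty list of vertices of `S`, with consecutive
vertices adjacent, starting and ending at the same vertex. -/
def IsLoopIn (d : ℕ) (S : Set (Fin d → ℤ)) (L : List (Fin d → ℤ)) : Prop :=
  L ≠ [] ∧ L.head? = L.getLast? ∧ (∀ z ∈ L, z ∈ S) ∧ L.Chain' (Adj d)

/-- A path in `S` from `x` to `y`. -/
def IsPathFrom (d : ℕ) (S : Set (Fin d → ℤ)) (x y : Fin d → ℤ) (P : List (Fin d → ℤ)) :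
    Prop :=
  P ≠ [] ∧ P.head? = some x ∧ P.getLast? = some y ∧ (∀ z ∈ P, z ∈ S) ∧ P.Chain' (Adj d)

/-- Sum of an edge function along the consecutive (directed) edges of a path. -/
def pathSum {d : ℕ} (ω : (Fin d → ℤ) × (Fin d → ℤ) → ℝ) (P : List (Fin d → ℤ)) : ℝ :=
  ((P.zip P.tail).map ω).sum

/-- The 1-chain (with integer coefficients, modulo orientation reversal) associated with a
list of vertices, assigning to the directed edge `e` the (algebraic) number of times it is
traversed. -/
def loopChain {d : ℕ} (L : List (Fin d → ℤ)) (e : (Fin d → ℤ) × (Fin d → ℤ)) : ℤ :=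
  ((L.zip L.tail).count e : ℤ) - ((L.zip L.tail).count (e.2, e.1) : ℤ)

/-- The boundary chain of the plaquette with base `z` and directions `k, l`. -/
def plaqChain (d : ℕ) (z : Fin d → ℤ) (k l : Fin d) :
    (Fin d → ℤ) × (Fin d → ℤ) → ℤ :=
  loopChain [z, z + Pi.single k 1, z + Pi.single k 1 + Pi.single l 1, z + Pi.single l 1, z]

/-- `(D^ε)^*` (with site set `S`) is simply connected: every site self-avoiding loop can be
deformed to a trivial loop (with no edge) by a finite sequence of loops each differing
(algebraically, i.e. on the level of 1-chains) from the previous one by a single plaquette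
of `S`. -/
def SimplyConnectedLat (d : ℕ) (S : Set (Fin d → ℤ)) : Prop :=
  ∀ L : List (Fin d → ℤ), IsLoopIn d S L → L.dropLast.Nodup →
    ∃ (N : ℕ) (B : ℕ → List (Fin d → ℤ)),
      B 0 = L ∧ (∀ j ≤ N, IsLoopIn d S (B j)) ∧ (∃ z, B N = [z]) ∧
      ∀ j < N, ∃ (z : Fin d → ℤ) (k l : Fin d) (c : ℤ),
        k ≠ l ∧ (c = 1 ∨ c = -1) ∧
        z ∈ S ∧ z + Pi.single k 1 ∈ S ∧ z + Pi.single l 1 ∈ S ∧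
          z + Pi.single k 1 + Pi.single l 1 ∈ S ∧
        ∀ e, loopChain (B (j + 1)) e = loopChain (B j) e + c * plaqChain d z k l e

/-- `D` is discretely simply connected. -/
def DiscretelySimplyConnected (d : ℕ) (D : Set (Fin d → ℝ)) : Prop :=
  ∀ ε > (0 : ℝ), SimplyConnectedLat d (siteSet d D ε)

/-- The lattice set `S` is connected (by nearest-neighbour paths inside `S`). -/
def LatticeConnected (d : ℕ) (S : Set (Fin d → ℤ)) : Prop :=
  ∀ x ∈ S, ∀ y ∈ S, ∃ P, IsPathFrom d S x y P

/-! ### The convex potential `V^δ` -/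

/-- The convexified cosine potential `V^δ`. -/
def Vdelta (δ : ℝ) (x : ℝ) : ℝ :=
  if |x| ≤ δ then -Real.cos x
  else if δ < x then
    -Real.cos δ + Real.sin δ * (x - δ) + Real.cos δ / 2 * (x - δ) ^ 2
  else
    -Real.cos δ - Real.sin δ * (x + δ) + Real.cos δ / 2 * (x + δ) ^ 2

/-! ### Discrete harmonicity (d = 2) -/

/-- `h` is discrete harmonic on `S`: at every `x ∈ S` all of whose neighbours lie in `S`,
`h x` is the average of `h` over the four nearest neighbours. -/
def DiscreteHarmonicOn (S : Set (Fin 2 → ℤ)) (h : (Fin 2 → ℤ) → ℝ) : Prop :=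
  ∀ z ∈ S, (∀ w, Adj 2 z w → w ∈ S) →
    h z = (h (z + Pi.single 0 1) + h (z - Pi.single 0 1) +
           h (z + Pi.single 1 1) + h (z - Pi.single 1 1)) / 4

/-- `D^ε(r)`: sites of `D^ε` at (Euclidean-equivalent, here `ε`-scaled ℓ¹) distance more
than `r` from the boundary sites of `D^ε`. -/
def DrSet (D : Set (Fin 2 → ℝ)) (ε r : ℝ) : Set (Fin 2 → ℤ) :=
  {z | IsSite 2 D ε z ∧ ∀ w, IsBdry 2 D ε w → r < ε * ∑ i, |(z i : ℝ) - (w i : ℝ)|}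

end

end XYPaper

open XYPaper



open Real Set

namespace VdAux

noncomputable def Vd1 (δ x : ℝ) : ℝ :=
  if |x| ≤ δ then Real.sin x
  else if δ < x then Real.sin δ + Real.cos δ * (x - δ)
  else -Real.sin δ + Real.cos δ * (x + δ)

noncomputable def Vd2 (δ x : ℝ) : ℝ := if |x| ≤ δ then Real.cos x else Real.cos δ

lemma vdelta_eq_mid {δ x : ℝ} (h : |x| ≤ δ) : Vdelta δ x = -Real.cos x := by
  simp [Vdelta, h]

lemma vdelta_eq_right {δ x : ℝ} (hδ : 0 < δ) (h : δ ≤ x) :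
    Vdelta δ x = -Real.cos δ + Real.sin δ * (x - δ) + Real.cos δ / 2 * (x - δ) ^ 2 := by
  rcases eq_or_lt_of_le h with rfl | h'
  · simp [Vdelta, abs_of_pos hδ]
  · have hx : ¬ |x| ≤ δ := by rw [abs_of_pos (hδ.trans h')]; linarith
    simp [Vdelta, hx, h']

lemma vdelta_eq_left {δ x : ℝ} (hδ : 0 < δ) (h : x ≤ -δ) :
    Vdelta δ x = -Real.cos δ - Real.sin δ * (x + δ) + Real.cos δ / 2 * (x + δ) ^ 2 := by
  rcases eq_or_lt_of_le h with rfl | h'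
  · simp [Vdelta, abs_of_pos hδ, abs_of_neg (neg_neg_of_pos hδ)]
  · have hx : ¬ |x| ≤ δ := by rw [abs_of_neg (by linarith)]; linarith
    have hx2 : ¬ δ < x := by linarith
    simp [Vdelta, hx, hx2]

lemma vd1_eq_mid {δ x : ℝ} (h : |x| ≤ δ) : Vd1 δ x = Real.sin x := by
  simp [Vd1, h]

lemma vd1_eq_right {δ x : ℝ} (hδ : 0 < δ) (h : δ ≤ x) :
    Vd1 δ x = Real.sin δ + Real.cos δ * (x - δ) := by
  rcases eq_or_lt_of_le h with rfl | h'
  · simp [Vd1, abs_of_pos hδ]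
  · have hx : ¬ |x| ≤ δ := by rw [abs_of_pos (hδ.trans h')]; linarith
    simp [Vd1, hx, h']

lemma vd1_eq_left {δ x : ℝ} (hδ : 0 < δ) (h : x ≤ -δ) :
    Vd1 δ x = -Real.sin δ + Real.cos δ * (x + δ) := by
  rcases eq_or_lt_of_le h with rfl | h'
  · simp [Vd1, abs_of_pos hδ, abs_of_neg (neg_neg_of_pos hδ)]
  · have hx : ¬ |x| ≤ δ := by rw [abs_of_neg (by linarith)]; linarith
    have hx2 : ¬ δ < x := by linarith
    simp [Vd1, hx, hx2]

lemma hasDerivAt_Q (δ x : ℝ) :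
    HasDerivAt (fun y => -Real.cos δ + Real.sin δ * (y - δ) + Real.cos δ / 2 * (y - δ) ^ 2)
      (Real.sin δ + Real.cos δ * (x - δ)) x := by
  have h1 : HasDerivAt (fun y : ℝ => y - δ) 1 x := (hasDerivAt_id x).sub_const δ
  have := ((h1.const_mul (Real.sin δ)).const_add (-Real.cos δ)).add
      ((h1.pow 2).const_mul (Real.cos δ / 2))
  refine this.congr_deriv ?_
  ring

lemma hasDerivAt_L (δ x : ℝ) :
    HasDerivAt (fun y => -Real.cos δ - Real.sin δ * (y + δ) + Real.cos δ / 2 * (y + δ) ^ 2)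
      (-Real.sin δ + Real.cos δ * (x + δ)) x := by
  have h1 : HasDerivAt (fun y : ℝ => y + δ) 1 x := (hasDerivAt_id x).add_const δ
  have h2 : HasDerivAt (fun y : ℝ => -Real.cos δ - Real.sin δ * (y + δ))
      (-Real.sin δ) x := by
    simpa using ((h1.const_mul (Real.sin δ)).const_sub (-Real.cos δ))
  have := h2.add ((h1.pow 2).const_mul (Real.cos δ / 2))
  refine this.congr_deriv ?_
  ring

lemma hasDerivAt_negcos (x : ℝ) : HasDerivAt (fun y => -Real.cos y) (Real.sin x) x := by
  have := (Real.hasDerivAt_cos x).neg; rw [neg_neg] at this; exact this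

lemma hasDerivAt_Vdelta (δ : ℝ) (hδ : 0 < δ) (x : ℝ) :
    HasDerivAt (Vdelta δ) (Vd1 δ x) x := by
  rcases lt_trichotomy (|x|) δ with hlt | heq | hgt
  · rw [vd1_eq_mid hlt.le]
    refine (hasDerivAt_negcos x).congr_of_eventuallyEq ?_
    filter_upwards [(isOpen_Iio.preimage continuous_abs).mem_nhds hlt] with y hy
    exact vdelta_eq_mid (le_of_lt hy)
  · rcases (abs_eq hδ.le).mp heq with h | h <;> rw [h]
    · -- x = δ
      have h1 : HasDerivWithinAt (Vdelta δ) (Real.sin δ) (Icc (-δ) δ) δ :=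
        ((hasDerivAt_negcos δ).hasDerivWithinAt).congr
          (fun y hy => vdelta_eq_mid (abs_le.mpr ⟨hy.1, hy.2⟩))
          (vdelta_eq_mid (by rw [abs_of_pos hδ]))
      have h2 : HasDerivWithinAt (Vdelta δ) (Real.sin δ) (Ici δ) δ := by
        have hQ := (hasDerivAt_Q δ δ).hasDerivWithinAt (s := Ici δ)
        have he : Real.sin δ + Real.cos δ * (δ - δ) = Real.sin δ := by ring
        rw [he] at hQ
        exact hQ.congr (fun y hy => vdelta_eq_right hδ hy) (vdelta_eq_right hδ le_rfl)
      have h3 := h1.union h2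
      rw [Set.Icc_union_Ici_eq_Ici (by linarith : -δ ≤ δ)] at h3
      rw [vd1_eq_mid (by rw [abs_of_pos hδ])]
      exact h3.hasDerivAt (Ici_mem_nhds (by linarith))
    · -- x = -δ
      have h1 : HasDerivWithinAt (Vdelta δ) (Real.sin (-δ)) (Icc (-δ) δ) (-δ) :=
        ((hasDerivAt_negcos (-δ)).hasDerivWithinAt).congr
          (fun y hy => vdelta_eq_mid (abs_le.mpr ⟨hy.1, hy.2⟩))
          (vdelta_eq_mid (by rw [abs_neg, abs_of_pos hδ]))
      have h2 : HasDerivWithinAt (Vdelta δ) (Real.sin (-δ)) (Iic (-δ)) (-δ) := by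
        have hL := (hasDerivAt_L δ (-δ)).hasDerivWithinAt (s := Iic (-δ))
        have he : -Real.sin δ + Real.cos δ * (-δ + δ) = Real.sin (-δ) := by
          rw [Real.sin_neg]; ring
        rw [he] at hL
        exact hL.congr (fun y hy => vdelta_eq_left hδ hy) (vdelta_eq_left hδ le_rfl)
      have h3 := h2.union h1
      rw [Set.Iic_union_Icc_eq_Iic (by linarith : -δ ≤ δ)] at h3
      rw [vd1_eq_mid (by rw [abs_neg, abs_of_pos hδ])]
      exact h3.hasDerivAt (Iic_mem_nhds (by linarith))
  · rcases lt_abs.mp hgt with h | h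
    · rw [vd1_eq_right hδ h.le]
      refine (hasDerivAt_Q δ x).congr_of_eventuallyEq ?_
      filter_upwards [Ioi_mem_nhds h] with y hy
      exact vdelta_eq_right hδ (le_of_lt hy)
    · rw [vd1_eq_left hδ (by linarith)]
      refine (hasDerivAt_L δ x).congr_of_eventuallyEq ?_
      filter_upwards [Iio_mem_nhds (show x < -δ by linarith)] with y hy
      exact vdelta_eq_left hδ (le_of_lt hy)

lemma hasDerivAt_Vd1 (δ : ℝ) (hδ : 0 < δ) (x : ℝ) :
    HasDerivAt (Vd1 δ) (Vd2 δ x) x := by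
  have hQ : ∀ y : ℝ, HasDerivAt (fun z => Real.sin δ + Real.cos δ * (z - δ)) (Real.cos δ) y := by
    intro y
    have h1 : HasDerivAt (fun z : ℝ => z - δ) 1 y := (hasDerivAt_id y).sub_const δ
    simpa using (h1.const_mul (Real.cos δ)).const_add (Real.sin δ)
  have hL : ∀ y : ℝ, HasDerivAt (fun z => -Real.sin δ + Real.cos δ * (z + δ)) (Real.cos δ) y := by
    intro y
    have h1 : HasDerivAt (fun z : ℝ => z + δ) 1 y := (hasDerivAt_id y).add_const δ
    simpa using (h1.const_mul (Real.cos δ)).const_add (-Real.sin δ)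
  rcases lt_trichotomy (|x|) δ with hlt | heq | hgt
  · rw [show Vd2 δ x = Real.cos x by simp [Vd2, hlt.le]]
    refine (Real.hasDerivAt_sin x).congr_of_eventuallyEq ?_
    filter_upwards [(isOpen_Iio.preimage continuous_abs).mem_nhds hlt] with y hy
    exact vd1_eq_mid (le_of_lt hy)
  · rcases (abs_eq hδ.le).mp heq with h | h <;> rw [h]
    · have h1 : HasDerivWithinAt (Vd1 δ) (Real.cos δ) (Icc (-δ) δ) δ :=
        ((Real.hasDerivAt_sin δ).hasDerivWithinAt).congr
          (fun y hy => vd1_eq_mid (abs_le.mpr ⟨hy.1, hy.2⟩))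
          (vd1_eq_mid (by rw [abs_of_pos hδ]))
      have h2 : HasDerivWithinAt (Vd1 δ) (Real.cos δ) (Ici δ) δ :=
        ((hQ δ).hasDerivWithinAt).congr (fun y hy => vd1_eq_right hδ hy)
          (vd1_eq_right hδ le_rfl)
      have h3 := h1.union h2
      rw [Set.Icc_union_Ici_eq_Ici (by linarith : -δ ≤ δ)] at h3
      rw [show Vd2 δ δ = Real.cos δ by simp [Vd2, abs_of_pos hδ]]
      exact h3.hasDerivAt (Ici_mem_nhds (by linarith))
    · have h1 : HasDerivWithinAt (Vd1 δ) (Real.cos δ) (Icc (-δ) δ) (-δ) := by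
        have hs := (Real.hasDerivAt_sin (-δ)).hasDerivWithinAt (s := Icc (-δ) δ)
        rw [Real.cos_neg] at hs
        exact hs.congr (fun y hy => vd1_eq_mid (abs_le.mpr ⟨hy.1, hy.2⟩))
          (vd1_eq_mid (by rw [abs_neg, abs_of_pos hδ]))
      have h2 : HasDerivWithinAt (Vd1 δ) (Real.cos δ) (Iic (-δ)) (-δ) :=
        ((hL (-δ)).hasDerivWithinAt).congr (fun y hy => vd1_eq_left hδ hy)
          (vd1_eq_left hδ le_rfl)
      have h3 := h2.union h1
      rw [Set.Iic_union_Icc_eq_Iic (by linarith : -δ ≤ δ)] at h3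
      rw [show Vd2 δ (-δ) = Real.cos δ by
        simp [Vd2, abs_neg, abs_of_pos hδ]]
      exact h3.hasDerivAt (Iic_mem_nhds (by linarith))
  · have hVd2 : Vd2 δ x = Real.cos δ := by simp [Vd2, not_le.mpr hgt]
    rw [hVd2]
    rcases lt_abs.mp hgt with h | h
    · refine (hQ x).congr_of_eventuallyEq ?_
      filter_upwards [Ioi_mem_nhds h] with y hy
      exact vd1_eq_right hδ (le_of_lt hy)
    · refine (hL x).congr_of_eventuallyEq ?_
      filter_upwards [Iio_mem_nhds (show x < -δ by linarith)] with y hy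
      exact vd1_eq_left hδ (le_of_lt hy)

lemma continuous_Vd2 (δ : ℝ) : Continuous (Vd2 δ) := by
  unfold Vd2
  exact Continuous.if_le Real.continuous_cos continuous_const continuous_abs
    continuous_const (fun x hx => by rw [← Real.cos_abs, hx])

theorem Vdelta_properties' (δ : ℝ) (hδ0 : 0 < δ) (hδ : δ < π / 2) :
    ContDiff ℝ 2 (Vdelta δ) ∧
    (∀ x : ℝ, Real.cos δ ≤ iteratedDeriv 2 (Vdelta δ) x) ∧
    IsGLB (Set.range (iteratedDeriv 2 (Vdelta δ))) (Real.cos δ) ∧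
    ∀ x : ℝ, -Real.cos x ≤ Vdelta δ x := by
  have hπ : δ < π := lt_trans hδ (by linarith [Real.pi_pos])
  have hderiv : deriv (Vdelta δ) = Vd1 δ :=
    funext fun x => (hasDerivAt_Vdelta δ hδ0 x).deriv
  have hderiv1 : deriv (Vd1 δ) = Vd2 δ :=
    funext fun x => (hasDerivAt_Vd1 δ hδ0 x).deriv
  have h2 : iteratedDeriv 2 (Vdelta δ) = Vd2 δ := by
    rw [show (2 : ℕ) = 1 + 1 from rfl, iteratedDeriv_succ, iteratedDeriv_one, hderiv, hderiv1]
  have hbound : ∀ x, Real.cos δ ≤ Vd2 δ x := by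
    intro x
    unfold Vd2
    split
    · rename_i h
      have := Real.cos_le_cos_of_nonneg_of_le_pi (abs_nonneg x) hπ.le h
      rwa [Real.cos_abs] at this
    · exact le_refl _
  refine ⟨?_, ?_, ?_, ?_⟩
  · rw [show (2 : WithTop ℕ∞) = 1 + 1 from rfl, contDiff_succ_iff_deriv]
    refine ⟨fun x => (hasDerivAt_Vdelta δ hδ0 x).differentiableAt, by simp, ?_⟩
    rw [hderiv, contDiff_one_iff_deriv, hderiv1]
    exact ⟨fun x => (hasDerivAt_Vd1 δ hδ0 x).differentiableAt, continuous_Vd2 δ⟩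
  · intro x; rw [h2]; exact hbound x
  · rw [h2]
    refine IsLeast.isGLB ⟨⟨δ, ?_⟩, ?_⟩
    · simp [Vd2, abs_of_pos hδ0]
    · rintro y ⟨x, rfl⟩; exact hbound x
  · intro x
    have hs : 0 ≤ Real.sin δ := Real.sin_nonneg_of_nonneg_of_le_pi hδ0.le hπ.le
    have hc0 : 0 ≤ Real.cos δ := Real.cos_nonneg_of_mem_Icc ⟨by linarith [Real.pi_pos], hδ.le⟩
    rcases le_or_gt (|x|) δ with h | h
    · rw [vdelta_eq_mid h]
    · rcases lt_abs.mp h with h | h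
      · have ht : 0 ≤ x - δ := by linarith
        have h1 : 1 - (x - δ) ^ 2 / 2 ≤ Real.cos (x - δ) := Real.one_sub_sq_div_two_le_cos
        have h2 : Real.sin (x - δ) ≤ x - δ := Real.sin_le ht
        have h3 : Real.cos x = Real.cos δ * Real.cos (x - δ) - Real.sin δ * Real.sin (x - δ) := by
          rw [← Real.cos_add, show δ + (x - δ) = x by ring]
        rw [vdelta_eq_right hδ0 h.le]
        nlinarith [mul_nonneg hc0 (by linarith : (0:ℝ) ≤ Real.cos (x - δ) - 1 + (x - δ) ^ 2 / 2),
          mul_nonneg hs (by linarith : (0:ℝ) ≤ (x - δ) - Real.sin (x - δ))]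
      · have hx : x ≤ -δ := by linarith
        have ht : 0 ≤ -(x + δ) := by linarith
        have h1 : 1 - (x + δ) ^ 2 / 2 ≤ Real.cos (-(x + δ)) := by
          have := Real.one_sub_sq_div_two_le_cos (x := -(x + δ))
          rwa [neg_sq] at this
        have h2 : Real.sin (-(x + δ)) ≤ -(x + δ) := Real.sin_le ht
        have h3 : Real.cos x = Real.cos δ * Real.cos (-(x + δ))
            - Real.sin δ * Real.sin (-(x + δ)) := by
          rw [← Real.cos_add, show δ + -(x + δ) = -x by ring, Real.cos_neg]
        rw [vdelta_eq_left hδ0 hx]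
        nlinarith [mul_nonneg hc0
            (by linarith : (0:ℝ) ≤ Real.cos (-(x + δ)) - 1 + (x + δ) ^ 2 / 2),
          mul_nonneg hs (by linarith : (0:ℝ) ≤ -(x + δ) - Real.sin (-(x + δ)))]

end VdAux

/-- Properties of the convexified potential `V^δ` (for `0 < δ < π/2`): it is C², its second
derivative is bounded below by `cos δ` with infimum exactly `cos δ`, and `V^δ(x) ≥ -cos x`. -/
theorem Vdelta_properties (δ : ℝ) (hδ0 : 0 < δ) (hδ : δ < π / 2) :
    ContDiff ℝ 2 (Vdelta δ) ∧
    (∀ x : ℝ, Real.cos δ ≤ iteratedDeriv 2 (Vdelta δ) x) ∧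
    IsGLB (Set.range (iteratedDeriv 2 (Vdelta δ))) (Real.cos δ) ∧
    ∀ x : ℝ, -Real.cos x ≤ Vdelta δ x := VdAux.Vdelta_properties' δ hδ0 hδ
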